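/- Let P be a rank-one orthogonal projection and Q any orthogonal projection on a finite-dimensional complex Hilbert space. If Tr(P Q ρ Q P) = Tr(Q P ρ P Q) for all density operators ρ, then either P Q = 0 or Q P = P. -/
import Mathlib

open Matrix ComplexOrder

private lemma mulVec_ext' {n : ℕ} {A B : Matrix (Fin n) (Fin n) ℂ}
    (h : ∀ v, A *ᵥ v = B *ᵥ v) : A = B := by
  ext i j
  have := congrFun (h (Pi.single j 1)) i
  simpa [Matrix.mulVec_single] using this

private lemma quad_zero' {n : ℕ} {A : Matrix (Fin n) (Fin n) ℂ}
    (hA : ∀ v : Fin n → ℂ, star v ⬝ᵥ (A *ᵥ v) = 0) : A = 0 := by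
  have hbil : ∀ x y : Fin n → ℂ,
      star x ⬝ᵥ (A *ᵥ y) + star y ⬝ᵥ (A *ᵥ x) = 0 := by
    intro x y
    have h := hA (x + y)
    simp only [star_add, add_dotProduct, mulVec_add, dotProduct_add] at h
    have hx := hA x
    have hy := hA y
    linear_combination h - hx - hy
  have hbil2 : ∀ x y : Fin n → ℂ, star x ⬝ᵥ (A *ᵥ y) = 0 := by
    intro x y
    have h1 := hbil x y
    have h2 := hbil (Complex.I • x) y
    simp only [star_smul, smul_dotProduct, mulVec_smul, dotProduct_smul, smul_eq_mul,
      Complex.star_def, Complex.conj_I] at h2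
    linear_combination (Complex.I / 2) * h2 + (1 / 2 : ℂ) * h1 + ((star x ⬝ᵥ (A *ᵥ y) - star y ⬝ᵥ (A *ᵥ x)) / 2) * Complex.I_sq
  apply mulVec_ext' (B := (0 : Matrix (Fin n) (Fin n) ℂ))
  intro v
  ext i
  have := hbil2 (Pi.single i 1) v
  simpa [dotProduct, Pi.single_apply, apply_ite] using this

private lemma trace_mul_outer' {n : ℕ} (M : Matrix (Fin n) (Fin n) ℂ) (w : Fin n → ℂ) :
    (M * Matrix.vecMulVec w (star w)).trace = star w ⬝ᵥ (M *ᵥ w) := by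
  simp only [Matrix.trace, Matrix.diag, Matrix.mul_apply, Matrix.vecMulVec_apply,
    Pi.star_apply, dotProduct, Matrix.mulVec, Finset.mul_sum]
  exact Finset.sum_congr rfl fun i _ => Finset.sum_congr rfl fun j _ => by ring

/-- For a rank-one projection `P` and a projection `Q`, the Davies trace
condition forces `PQ = 0` or `QP = P`. -/
theorem rank_one_compat {n : ℕ} (P Q : Matrix (Fin n) (Fin n) ℂ)
    (hPsa : Pᴴ = P) (hPidem : P * P = P) (hPrank : P.rank = 1)
    (hQsa : Qᴴ = Q) (hQidem : Q * Q = Q)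
    (h : ∀ ρ : Matrix (Fin n) (Fin n) ℂ, ρ.PosSemidef → ρ.trace = 1 →
      (P * Q * ρ * Q * P).trace = (Q * P * ρ * P * Q).trace) :
    P * Q = 0 ∨ Q * P = P := by
  classical
  -- Step 1: Q * P * Q = P * Q * P
  have key : Q * P * Q = P * Q * P := by
    have hq : ∀ v : Fin n → ℂ,
        star v ⬝ᵥ ((Q * P * Q) *ᵥ v) = star v ⬝ᵥ ((P * Q * P) *ᵥ v) := by
      intro v
      rcases eq_or_ne v 0 with rfl | hv
      · simp
      have hc0 : (0 : ℂ) ≤ star v ⬝ᵥ v := dotProduct_star_self_nonneg v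
      have hcne : star v ⬝ᵥ v ≠ 0 := fun h0 => hv (dotProduct_star_self_eq_zero.mp h0)
      set c : ℂ := star v ⬝ᵥ v with hc
      have him : c.im = 0 := by
        have := hc0
        rw [Complex.le_def] at this
        simpa using this.2.symm
      have hre : 0 < c.re := by
        have := hc0
        rw [Complex.le_def] at this
        rcases lt_or_eq_of_le (by simpa using this.1) with hlt | heq
        · exact hlt
        · exact absurd (Complex.ext heq.symm him) hcne
      have hcre : c = (c.re : ℂ) := Complex.ext rfl him
      set r : ℝ := Real.sqrt c.re with hr
      have hrpos : 0 < r := Real.sqrt_pos.mpr hre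
      set s : ℂ := ((r : ℂ))⁻¹ with hs
      have hsne : s ≠ 0 := by
        simp [hs, hrpos.ne']
      set w : Fin n → ℂ := s • v with hw
      have hww : star w ⬝ᵥ w = 1 := by
        rw [hw, star_smul, smul_dotProduct, dotProduct_smul, ← hc]
        have : (starRingEnd ℂ) s = s := by
          simp [hs, ← Complex.ofReal_inv]
        rw [smul_eq_mul, smul_eq_mul, Complex.star_def, this, hcre, hs, ← Complex.ofReal_inv,
          ← Complex.ofReal_mul, ← Complex.ofReal_mul]
        norm_cast
        have hrr : r * r = c.re := Real.mul_self_sqrt hre.le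
        field_simp
        linarith [hrr]
      set ρ : Matrix (Fin n) (Fin n) ℂ := Matrix.vecMulVec w (star w) with hρ
      have hPSD : ρ.PosSemidef := by
        rw [hρ, Matrix.vecMulVec_eq (Fin 1), ← Matrix.conjTranspose_replicateCol]
        exact Matrix.posSemidef_self_mul_conjTranspose _
      have htr : ρ.trace = 1 := by
        rw [hρ]
        have : (Matrix.vecMulVec w (star w)).trace = w ⬝ᵥ star w := by
          simp [Matrix.trace, Matrix.diag, Matrix.vecMulVec_apply, dotProduct]
        rw [this, dotProduct_comm, hww]
      have hh := h ρ hPSD htr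
      have e1 : (P * Q * ρ * Q * P).trace = (Q * P * Q * ρ).trace := by
        rw [show P * Q * ρ * Q * P = (P * Q * ρ * Q) * P from rfl, Matrix.trace_mul_comm]
        rw [show P * (P * Q * ρ * Q) = P * P * Q * ρ * Q by simp only [Matrix.mul_assoc], hPidem]
        rw [show P * Q * ρ * Q = (P * Q * ρ) * Q from rfl, Matrix.trace_mul_comm]
        rw [show Q * (P * Q * ρ) = Q * P * Q * ρ by simp only [Matrix.mul_assoc]]
      have e2 : (Q * P * ρ * P * Q).trace = (P * Q * P * ρ).trace := by
        rw [show Q * P * ρ * P * Q = (Q * P * ρ * P) * Q from rfl, Matrix.trace_mul_comm]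
        rw [show Q * (Q * P * ρ * P) = Q * Q * P * ρ * P by simp only [Matrix.mul_assoc], hQidem]
        rw [show Q * P * ρ * P = (Q * P * ρ) * P from rfl, Matrix.trace_mul_comm]
        rw [show P * (Q * P * ρ) = P * Q * P * ρ by simp only [Matrix.mul_assoc]]
      rw [e1, e2, hρ, trace_mul_outer', trace_mul_outer'] at hh
      -- hh : star w ⬝ᵥ (Q*P*Q) *ᵥ w = star w ⬝ᵥ (P*Q*P) *ᵥ w
      have hscale : ∀ M : Matrix (Fin n) (Fin n) ℂ,
          star w ⬝ᵥ (M *ᵥ w) = (star s * s) * (star v ⬝ᵥ (M *ᵥ v)) := by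
        intro M
        rw [hw, star_smul, smul_dotProduct, mulVec_smul, dotProduct_smul]
        simp [mul_assoc, smul_eq_mul]
      rw [hscale, hscale] at hh
      have hfac : star s * s ≠ 0 := mul_ne_zero (star_ne_zero.mpr hsne) hsne
      exact mul_left_cancel₀ hfac hh
    have : Q * P * Q - P * Q * P = 0 := by
      apply quad_zero'
      intro v
      rw [Matrix.sub_mulVec, dotProduct_sub, hq, sub_self]
    exact sub_eq_zero.mp this
  -- Step 2: find u spanning range of P
  have hPne : P ≠ 0 := by
    intro h0
    rw [h0, Matrix.rank_zero] at hPrank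
    exact one_ne_zero hPrank.symm
  have hex : ∃ x : Fin n → ℂ, P *ᵥ x ≠ 0 := by
    by_contra hall
    push_neg at hall
    exact hPne (mulVec_ext' (B := 0) fun v => by rw [hall v]; simp)
  obtain ⟨x, hx⟩ := hex
  set u : Fin n → ℂ := P *ᵥ x with hu_def
  have hu : u ≠ 0 := hx
  have hPu : P *ᵥ u = u := by
    rw [hu_def, Matrix.mulVec_mulVec, hPidem]
  have hrange : ∀ y : Fin n → ℂ, ∃ a : ℂ, P *ᵥ y = a • u := by
    have hspan : Submodule.span ℂ {u} = LinearMap.range P.mulVecLin := by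
      apply Submodule.eq_of_le_of_finrank_eq
      · rw [Submodule.span_le, Set.singleton_subset_iff]
        exact ⟨x, by simp [Matrix.mulVecLin_apply, hu_def]⟩
      · rw [finrank_span_singleton hu]
        exact hPrank.symm
    intro y
    have hy : P *ᵥ y ∈ LinearMap.range P.mulVecLin := ⟨y, by simp [Matrix.mulVecLin_apply]⟩
    rw [← hspan, Submodule.mem_span_singleton] at hy
    obtain ⟨a, ha⟩ := hy
    exact ⟨a, ha.symm⟩
  -- adjoint identities
  have hPdot : ∀ a b : Fin n → ℂ, star (P *ᵥ a) ⬝ᵥ b = star a ⬝ᵥ (P *ᵥ b) := by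
    intro a b
    rw [Matrix.star_mulVec, hPsa, ← Matrix.dotProduct_mulVec]
  have hQdot : ∀ a b : Fin n → ℂ, star (Q *ᵥ a) ⬝ᵥ b = star a ⬝ᵥ (Q *ᵥ b) := by
    intro a b
    rw [Matrix.star_mulVec, hQsa, ← Matrix.dotProduct_mulVec]
  set q : Fin n → ℂ := Q *ᵥ u with hq_def
  set vv : Fin n → ℂ := P *ᵥ q with hvv_def
  have hQvv : Q *ᵥ vv = vv := by
    have hk := congrArg (fun M : Matrix (Fin n) (Fin n) ℂ => M *ᵥ u) key
    simp only [← Matrix.mulVec_mulVec] at hk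
    rw [hPu] at hk
    exact hk
  obtain ⟨t, ht⟩ := hrange q
  rw [← hvv_def] at ht
  set c : ℂ := star u ⬝ᵥ u with hc_def
  have hcne : c ≠ 0 := fun h0 => hu (dotProduct_star_self_eq_zero.mp h0)
  set d : ℂ := star u ⬝ᵥ q with hd_def
  have h1 : star u ⬝ᵥ vv = t * c := by
    rw [ht, dotProduct_smul, smul_eq_mul, hc_def]
  have h1' : star u ⬝ᵥ vv = d := by
    rw [hvv_def, ← hPdot, hPu, hd_def]
  have h2 : star vv ⬝ᵥ u = star t * c := by
    rw [ht, star_smul, smul_dotProduct, smul_eq_mul, hc_def]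
  have h2' : star vv ⬝ᵥ u = d := by
    rw [hvv_def, hPdot, hPu, hq_def, hQdot, ← hq_def, hd_def]
  have htreal : star t = t := by
    have : star t * c = t * c := by rw [← h2, h2', ← h1', h1]
    exact mul_right_cancel₀ hcne this
  have h3 : star vv ⬝ᵥ vv = star t * t * c := by
    rw [ht, star_smul, smul_dotProduct, dotProduct_smul, smul_eq_mul, smul_eq_mul, hc_def]
    ring
  have h3' : star vv ⬝ᵥ vv = t * c := by
    have hPvv : P *ᵥ vv = vv := by rw [hvv_def, Matrix.mulVec_mulVec, hPidem]
    calc star vv ⬝ᵥ vv = star (P *ᵥ q) ⬝ᵥ vv := by rw [← hvv_def]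
      _ = star q ⬝ᵥ (P *ᵥ vv) := hPdot q vv
      _ = star q ⬝ᵥ vv := by rw [hPvv]
      _ = star (Q *ᵥ u) ⬝ᵥ vv := by rw [← hq_def]
      _ = star u ⬝ᵥ (Q *ᵥ vv) := hQdot u vv
      _ = star u ⬝ᵥ vv := by rw [hQvv]
      _ = t * c := h1
  have htt : t * t = t := by
    have : star t * t * c = t * c := by rw [← h3, h3']
    have := mul_right_cancel₀ hcne this
    rwa [htreal] at this
  have ht01 : t = 0 ∨ t = 1 := by
    rcases mul_eq_zero.mp (show t * (t - 1) = 0 by linear_combination htt) with h0 | h0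
    · exact Or.inl h0
    · exact Or.inr (by linear_combination h0)
  rcases ht01 with rfl | rfl
  · -- t = 0 : prove P * Q = 0
    left
    have hvv0 : vv = 0 := by rw [ht, zero_smul]
    have hd0 : d = 0 := by rw [← h1', hvv0]; simp
    have hQq : Q *ᵥ q = q := by rw [hq_def, Matrix.mulVec_mulVec, hQidem]
    have hq0 : q = 0 := by
      apply dotProduct_star_self_eq_zero.mp
      calc star q ⬝ᵥ q = star (Q *ᵥ u) ⬝ᵥ q := by rw [← hq_def]
        _ = star u ⬝ᵥ (Q *ᵥ q) := hQdot u q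
        _ = star u ⬝ᵥ q := by rw [hQq]
        _ = 0 := hd0
    have hQP : Q * P = 0 := by
      apply mulVec_ext'
      intro y
      obtain ⟨a, ha⟩ := hrange y
      rw [← Matrix.mulVec_mulVec, ha, Matrix.mulVec_smul, ← hq_def, hq0]
      simp
    calc P * Q = (Q * P)ᴴ := by rw [Matrix.conjTranspose_mul, hPsa, hQsa]
      _ = 0 := by rw [hQP]; simp
  · -- t = 1 : prove Q * P = P
    right
    have hvvu : vv = u := by rw [ht, one_smul]
    have hQu : Q *ᵥ u = u := by
      have := hQvv
      rwa [hvvu] at this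
    apply mulVec_ext'
    intro y
    obtain ⟨a, ha⟩ := hrange y
    rw [← Matrix.mulVec_mulVec, ha, Matrix.mulVec_smul, hQu, ← ha]
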